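/- Let a = e∘g with e a singular idempotent transformation of {1,...,n} and g a permutation. Then e lies in the subsemigroup generated by the conjugates {h⁻¹ah : h ∈ S_n}. -/
import Mathlib


/-- The full transformation monoid on `{1,...,n}`, modeled as `Function.End (Fin n)`
(multiplication is composition). -/
abbrev Tn (n : ℕ) := Function.End (Fin n)

/-- A permutation viewed as a transformation. -/
def ofPerm {n : ℕ} (g : Equiv.Perm (Fin n)) : Tn n := ⇑g

/-- The rank of a transformation: the size of its image. -/
def rnk {n : ℕ} (a : Tn n) : ℕ := (Finset.univ.image a).card

/-- The symmetric group embedded in `Tn n` as a set. -/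
def perms (n : ℕ) : Set (Tn n) := Set.range (fun g : Equiv.Perm (Fin n) => ofPerm g)

/-- The `S_n`-conjugacy class of a transformation. -/
def conjClass {n : ℕ} (t : Tn n) : Set (Tn n) :=
  {s | ∃ g : Equiv.Perm (Fin n), s = ofPerm g⁻¹ * t * ofPerm g}

/-- If `a = e∘g` with `e` a singular idempotent and `g` a permutation, then `e` lies in the
semigroup generated by the `S_n`-conjugates of `a`. -/
theorem stmt14 (n : ℕ) (e : Tn n) (he : e * e = e) (hs : ¬ Function.Bijective e)
    (g : Equiv.Perm (Fin n)) (a : Tn n) (hag : a = ofPerm g * e) :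
    e ∈ Subsemigroup.closure (conjClass a) := by
  have hmul : ∀ p q : Equiv.Perm (Fin n), ofPerm (p * q) = ofPerm p * ofPerm q := by
    intro p q; rfl
  have hone : ofPerm (1 : Equiv.Perm (Fin n)) = 1 := rfl
  -- `ofPerm g⁻¹ * a = e`
  have hinv : ofPerm g⁻¹ * ofPerm g = 1 := by
    rw [← hmul, inv_mul_cancel, hone]
  have hea : ofPerm g⁻¹ * a = e := by
    rw [hag, ← mul_assoc, hinv, one_mul]
  have key : ∀ k : ℕ,
      (ofPerm g⁻¹ * a) ^ (k + 1) * ofPerm (g ^ (k + 1)) ∈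
        Subsemigroup.closure (conjClass a) := by
    intro k
    induction k with
    | zero =>
      apply Subsemigroup.subset_closure
      exact ⟨g, by rw [pow_one, pow_one]⟩
    | succ k ih =>
      have hconj : ofPerm (g ^ (k + 2))⁻¹ * a * ofPerm (g ^ (k + 2)) ∈
          Subsemigroup.closure (conjClass a) :=
        Subsemigroup.subset_closure ⟨g ^ (k + 2), rfl⟩
      have heq : (ofPerm g⁻¹ * a) ^ (k + 2) * ofPerm (g ^ (k + 2)) =
          ((ofPerm g⁻¹ * a) ^ (k + 1) * ofPerm (g ^ (k + 1))) *
            (ofPerm (g ^ (k + 2))⁻¹ * a * ofPerm (g ^ (k + 2))) := by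
        have h1 : ofPerm (g ^ (k + 1)) * ofPerm (g ^ (k + 2))⁻¹ = ofPerm g⁻¹ := by
          rw [← hmul]; congr 1; group
        calc (ofPerm g⁻¹ * a) ^ (k + 2) * ofPerm (g ^ (k + 2))
            = (ofPerm g⁻¹ * a) ^ (k + 1) * (ofPerm g⁻¹ * a) * ofPerm (g ^ (k + 2)) := by
              rw [pow_succ]
          _ = (ofPerm g⁻¹ * a) ^ (k + 1) *
                (ofPerm (g ^ (k + 1)) * ofPerm (g ^ (k + 2))⁻¹) * a *
                ofPerm (g ^ (k + 2)) := by rw [h1, mul_assoc _ _ a]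
          _ = _ := by simp only [mul_assoc]
      rw [heq]
      exact Subsemigroup.mul_mem _ ih hconj
  have hm : 0 < orderOf g := orderOf_pos g
  have := key (orderOf g - 1)
  rw [Nat.sub_add_cancel hm, pow_orderOf_eq_one, hone, mul_one, hea] at this
  -- e ^ orderOf g = e
  have hpow : ∀ k : ℕ, e ^ (k + 1) = e := by
    intro k
    induction k with
    | zero => rw [pow_one]
    | succ k ih => rw [pow_succ, ih, he]
  have := (by rw [← Nat.sub_add_cancel hm] at this; exact this :
    e ^ (orderOf g - 1 + 1) ∈ Subsemigroup.closure (conjClass a))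
  rwa [hpow] at this
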